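/- Ladyzhenskaya's inequality in two dimensions: there is a constant c > 0 such that for every function u in H¹₀ of a bounded domain O ⊂ ℝ², the L⁴ norm of u satisfies ‖u‖_{L⁴}² ≤ c ‖u‖_{L²} ‖∇u‖_{L²}. -/

import Mathlib

open MeasureTheory

/-- Ladyzhenskaya's inequality in 2D: `‖u‖_{L⁴}² ≤ c ‖u‖_{L²} ‖∇u‖_{L²}` for
`u ∈ H¹₀(O)`, formalized on the dense subclass of compactly supported `C¹`
functions with support in `O`. -/
theorem ladyzhenskaya_2d (O : Set (EuclideanSpace ℝ (Fin 2))) (hO : IsOpen O)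
    (hObdd : Bornology.IsBounded O) :
    ∃ c > 0, ∀ u : EuclideanSpace ℝ (Fin 2) → ℝ,
      ContDiff ℝ 1 u → HasCompactSupport u → tsupport u ⊆ O →
      (∫ x in O, |u x| ^ (4 : ℝ)) ^ ((1 : ℝ) / 2) ≤
        c * (∫ x in O, |u x| ^ (2 : ℝ)) ^ ((1 : ℝ) / 2) *
          (∫ x in O, ‖fderiv ℝ u x‖ ^ (2 : ℝ)) ^ ((1 : ℝ) / 2) := by
  set μ : Measure (EuclideanSpace ℝ (Fin 2)) := volume with hμdef
  set C : NNReal := eLpNormLESNormFDerivOneConst μ 2 with hCdef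
  have hconj : NNReal.HolderConjugate (Module.finrank ℝ (EuclideanSpace ℝ (Fin 2))) 2 := by
    have : Module.finrank ℝ (EuclideanSpace ℝ (Fin 2)) = 2 := by simp
    rw [this, NNReal.holderConjugate_iff]
    constructor
    · norm_num
    · rw [← NNReal.coe_inj]; push_cast; norm_num
  refine ⟨2 * C + 1, by positivity, fun u hu h2u h3u => ?_⟩
  have hdu : Differentiable ℝ u := hu.differentiable one_ne_zero
  have hcu : Continuous u := hu.continuous
  have hcd : Continuous (fderiv ℝ u) := (hu.fderiv_right (m := 0) le_rfl).continuous
  -- the squared function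
  set v : EuclideanSpace ℝ (Fin 2) → ℝ := fun x => u x * u x with hvdef
  have hv : ContDiff ℝ 1 v := hu.mul hu
  have h2v : HasCompactSupport v := h2u.mul_left
  -- pointwise derivative of v
  have hfv : ∀ x, (‖fderiv ℝ v x‖₊ : ENNReal) = 2 * (‖u x‖₊ * ‖fderiv ℝ u x‖₊) := by
    intro x
    have h1 : fderiv ℝ v x = u x • fderiv ℝ u x + u x • fderiv ℝ u x := by
      exact fderiv_mul (hdu x) (hdu x)
    have h2 : fderiv ℝ v x = (2 * u x) • fderiv ℝ u x := by
      rw [h1, ← add_smul]; ring_nf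
    rw [h2]
    rw [nnnorm_smul]
    push_cast
    have : (‖(2 : ℝ) * u x‖₊ : ENNReal) = 2 * ‖u x‖₊ := by
      rw [nnnorm_mul]; push_cast; norm_num
    rw [this]; ring
  -- lintegral quantities
  set IA : ENNReal := ∫⁻ x, (‖u x‖₊ : ENNReal) ^ (4 : ℝ) ∂μ with hIA
  set IB : ENNReal := ∫⁻ x, (‖u x‖₊ : ENNReal) ^ (2 : ℝ) ∂μ with hIB
  set ID : ENNReal := ∫⁻ x, (‖fderiv ℝ u x‖₊ : ENNReal) ^ (2 : ℝ) ∂μ with hID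
  -- Sobolev for v
  have sob := eLpNorm_le_eLpNorm_fderiv_one μ hv h2v hconj
  have hel : eLpNorm v 2 μ = IA ^ ((1:ℝ)/2) := by
    rw [eLpNorm_eq_lintegral_rpow_enorm_toReal (by norm_num) (by norm_num)]
    congr 1
    · apply lintegral_congr
      intro x
      have h22 : ∀ a : ENNReal, a ^ (2:ℝ) = a * a := fun a => by
        rw [show (2:ℝ) = ((2:ℕ):ℝ) by norm_num, ENNReal.rpow_natCast, pow_two]
      have : (‖v x‖₊ : ENNReal) = (‖u x‖₊ : ENNReal) ^ (2:ℝ) := by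
        simp only [hvdef, nnnorm_mul]
        push_cast
        rw [h22]
      rw [enorm_eq_nnnorm, this, ← ENNReal.rpow_mul]
      norm_num
  have hel1 : eLpNorm (fderiv ℝ v) 1 μ = ∫⁻ x, (‖fderiv ℝ v x‖₊ : ENNReal) ∂μ := by
    rw [eLpNorm_one_eq_lintegral_enorm]; simp only [enorm_eq_nnnorm]
  -- Hölder
  have holder : ∫⁻ x, (‖u x‖₊ : ENNReal) * ‖fderiv ℝ u x‖₊ ∂μ ≤
      IB ^ ((1:ℝ)/2) * ID ^ ((1:ℝ)/2) :=
    ENNReal.lintegral_mul_le_Lp_mul_Lq μ (Real.holderConjugate_iff.mpr ⟨one_lt_two, by norm_num⟩) (by fun_prop) (by fun_prop)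
  have key : IA ^ ((1:ℝ)/2) ≤ (2 * C) * (IB ^ ((1:ℝ)/2) * ID ^ ((1:ℝ)/2)) := by
    calc IA ^ ((1:ℝ)/2) = eLpNorm v 2 μ := hel.symm
      _ ≤ C * eLpNorm (fderiv ℝ v) 1 μ := sob
      _ = C * ∫⁻ x, (‖fderiv ℝ v x‖₊ : ENNReal) ∂μ := by rw [hel1]
      _ = C * (2 * ∫⁻ x, (‖u x‖₊ : ENNReal) * ‖fderiv ℝ u x‖₊ ∂μ) := by
          rw [← lintegral_const_mul 2 (by fun_prop)]
          congr 1
          exact lintegral_congr fun x => hfv x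
      _ ≤ C * (2 * (IB ^ ((1:ℝ)/2) * ID ^ ((1:ℝ)/2))) := by gcongr
      _ = (2 * C) * (IB ^ ((1:ℝ)/2) * ID ^ ((1:ℝ)/2)) := by ring
  -- relate lintegrals to the Bochner set integrals
  have hcompl4 : ∀ x ∉ O, |u x| ^ (4:ℝ) = 0 := by
    intro x hx
    have : u x = 0 := image_eq_zero_of_notMem_tsupport (fun h => hx (h3u h))
    simp [this]
  have hcompl2 : ∀ x ∉ O, |u x| ^ (2:ℝ) = 0 := by
    intro x hx
    have : u x = 0 := image_eq_zero_of_notMem_tsupport (fun h => hx (h3u h))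
    simp [this]
  have hcomplD : ∀ x ∉ O, ‖fderiv ℝ u x‖ ^ (2:ℝ) = 0 := by
    intro x hx
    have hx' : x ∉ tsupport u := fun h => hx (h3u h)
    have : fderiv ℝ u x = 0 := by
      by_contra h
      exact hx' (support_fderiv_subset ℝ (Function.mem_support.mpr h))
    simp [this]
  have hA : ∫ x in O, |u x| ^ (4:ℝ) ∂μ = ∫ x, |u x| ^ (4:ℝ) ∂μ :=
    setIntegral_eq_integral_of_forall_compl_eq_zero hcompl4
  have hB : ∫ x in O, |u x| ^ (2:ℝ) ∂μ = ∫ x, |u x| ^ (2:ℝ) ∂μ :=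
    setIntegral_eq_integral_of_forall_compl_eq_zero hcompl2
  have hD : ∫ x in O, ‖fderiv ℝ u x‖ ^ (2:ℝ) ∂μ = ∫ x, ‖fderiv ℝ u x‖ ^ (2:ℝ) ∂μ :=
    setIntegral_eq_integral_of_forall_compl_eq_zero hcomplD
  -- integrability
  have hint4 : Integrable (fun x => |u x| ^ (4:ℝ)) μ := by
    apply Continuous.integrable_of_hasCompactSupport
    · exact (hcu.abs).rpow_const (fun x => Or.inr (by norm_num))
    · exact (h2u.abs).rpow_const (by norm_num)
  have hint2 : Integrable (fun x => |u x| ^ (2:ℝ)) μ := by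
    apply Continuous.integrable_of_hasCompactSupport
    · exact (hcu.abs).rpow_const (fun x => Or.inr (by norm_num))
    · exact (h2u.abs).rpow_const (by norm_num)
  have hintD : Integrable (fun x => ‖fderiv ℝ u x‖ ^ (2:ℝ)) μ := by
    apply Continuous.integrable_of_hasCompactSupport
    · exact (hcd.norm).rpow_const (fun x => Or.inr (by norm_num))
    · exact (h2u.fderiv ℝ).norm.rpow_const (by norm_num)
  -- ofReal identities
  have hIAeq : ENNReal.ofReal (∫ x, |u x| ^ (4:ℝ) ∂μ) = IA := by
    rw [MeasureTheory.ofReal_integral_eq_lintegral_ofReal hint4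
      (Filter.Eventually.of_forall fun x => Real.rpow_nonneg (abs_nonneg _) _)]
    apply lintegral_congr
    intro x
    rw [← Real.norm_eq_abs, ← ENNReal.ofReal_rpow_of_nonneg (norm_nonneg _) (by norm_num),
      ofReal_norm_eq_enorm, enorm_eq_nnnorm]
  have hIBeq : ENNReal.ofReal (∫ x, |u x| ^ (2:ℝ) ∂μ) = IB := by
    rw [MeasureTheory.ofReal_integral_eq_lintegral_ofReal hint2
      (Filter.Eventually.of_forall fun x => Real.rpow_nonneg (abs_nonneg _) _)]
    apply lintegral_congr
    intro x
    rw [← Real.norm_eq_abs, ← ENNReal.ofReal_rpow_of_nonneg (norm_nonneg _) (by norm_num),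
      ofReal_norm_eq_enorm, enorm_eq_nnnorm]
  have hIDeq : ENNReal.ofReal (∫ x, ‖fderiv ℝ u x‖ ^ (2:ℝ) ∂μ) = ID := by
    rw [MeasureTheory.ofReal_integral_eq_lintegral_ofReal hintD
      (Filter.Eventually.of_forall fun x => Real.rpow_nonneg (norm_nonneg _) _)]
    apply lintegral_congr
    intro x
    rw [← ENNReal.ofReal_rpow_of_nonneg (norm_nonneg _) (by norm_num),
      ofReal_norm_eq_enorm, enorm_eq_nnnorm]
  -- finiteness
  have hIAne : IA ≠ ⊤ := by rw [← hIAeq]; exact ENNReal.ofReal_ne_top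
  have hIBne : IB ≠ ⊤ := by rw [← hIBeq]; exact ENNReal.ofReal_ne_top
  have hIDne : ID ≠ ⊤ := by rw [← hIDeq]; exact ENNReal.ofReal_ne_top
  -- pass to reals
  have hAnn : (0:ℝ) ≤ ∫ x, |u x| ^ (4:ℝ) ∂μ :=
    integral_nonneg fun x => Real.rpow_nonneg (abs_nonneg _) _
  have hBnn : (0:ℝ) ≤ ∫ x, |u x| ^ (2:ℝ) ∂μ :=
    integral_nonneg fun x => Real.rpow_nonneg (abs_nonneg _) _
  have hDnn : (0:ℝ) ≤ ∫ x, ‖fderiv ℝ u x‖ ^ (2:ℝ) ∂μ :=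
    integral_nonneg fun x => Real.rpow_nonneg (norm_nonneg _) _
  rw [hA, hB, hD]
  have hfin : (2 * C : ENNReal) * (IB ^ ((1:ℝ)/2) * ID ^ ((1:ℝ)/2)) ≠ ⊤ := by
    apply ENNReal.mul_ne_top
    · exact ENNReal.mul_ne_top (by norm_num) ENNReal.coe_ne_top
    · exact ENNReal.mul_ne_top (ENNReal.rpow_ne_top_of_nonneg (by norm_num) hIBne)
        (ENNReal.rpow_ne_top_of_nonneg (by norm_num) hIDne)
  have := ENNReal.toReal_mono hfin key
  rw [ENNReal.toReal_mul, ENNReal.toReal_mul, ENNReal.toReal_mul] at this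
  rw [← hIAeq, ← hIBeq, ← hIDeq] at this
  rw [← ENNReal.toReal_rpow, ← ENNReal.toReal_rpow, ← ENNReal.toReal_rpow] at this
  rw [ENNReal.toReal_ofReal hAnn, ENNReal.toReal_ofReal hBnn, ENNReal.toReal_ofReal hDnn] at this
  simp only [ENNReal.toReal_ofNat, ENNReal.coe_toReal] at this
  have hBpos : (0:ℝ) ≤ (∫ x, |u x| ^ (2:ℝ) ∂μ) ^ ((1:ℝ)/2) := Real.rpow_nonneg hBnn _
  have hDpos : (0:ℝ) ≤ (∫ x, ‖fderiv ℝ u x‖ ^ (2:ℝ) ∂μ) ^ ((1:ℝ)/2) := Real.rpow_nonneg hDnn _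
  calc (∫ x, |u x| ^ (4:ℝ) ∂μ) ^ ((1:ℝ)/2)
      ≤ 2 * (C:ℝ) * ((∫ x, |u x| ^ (2:ℝ) ∂μ) ^ ((1:ℝ)/2) *
        (∫ x, ‖fderiv ℝ u x‖ ^ (2:ℝ) ∂μ) ^ ((1:ℝ)/2)) := by
        exact this
    _ ≤ (2 * C + 1) * (∫ x, |u x| ^ (2:ℝ) ∂μ) ^ ((1:ℝ)/2) *
        (∫ x, ‖fderiv ℝ u x‖ ^ (2:ℝ) ∂μ) ^ ((1:ℝ)/2) := by
        push_cast
        nlinarith [mul_nonneg hBpos hDpos, C.coe_nonneg]
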